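/- Let x, y ∈ ℝ^n be probability vectors (nonnegative entries summing to 1) with x majorized by y. Then the Shannon entropies satisfy H(x) ≥ H(y), where H(v) = -∑_i v_i log₂ v_i. -/

import Mathlib

open Finset

/-- The sum of the `k` largest entries of `v` (the maximum of `∑ i in s, v i`
over subsets `s` of cardinality `k`), via `sSup`. -/
noncomputable def kMaxSum {n : ℕ} (v : Fin n → ℝ) (k : ℕ) : ℝ :=
  sSup {t : ℝ | ∃ s : Finset (Fin n), s.card = k ∧ t = ∑ i ∈ s, v i}

/-- `x` is majorized by `y`: for every `1 ≤ k ≤ n` the sum of the `k` largest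
entries of `x` is at most that of `y`, and the total sums agree. -/
def Majorizes {n : ℕ} (x y : Fin n → ℝ) : Prop :=
  (∀ k : ℕ, 1 ≤ k → k ≤ n → kMaxSum x k ≤ kMaxSum y k) ∧ (∑ i, x i = ∑ i, y i)

/-- extend a tuple to ℕ by zero -/
noncomputable def extz {n : ℕ} (w : Fin n → ℝ) : ℕ → ℝ :=
  fun j => if h : j < n then w ⟨j, h⟩ else 0

lemma extz_antitone {n : ℕ} {w : Fin n → ℝ} (hw : Antitone w) (h0 : ∀ i, 0 ≤ w i) :
    Antitone (extz w) := by
  intro i j hij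
  unfold extz
  by_cases hj : j < n
  · have hi : i < n := lt_of_le_of_lt hij hj
    simp only [dif_pos hi, dif_pos hj]
    exact hw (by exact_mod_cast hij : (⟨i, hi⟩ : Fin n) ≤ ⟨j, hj⟩)
  · simp only [dif_neg hj]
    by_cases hi : i < n
    · simp only [dif_pos hi]; exact h0 _
    · simp [dif_neg hi]

lemma strictMono_le_apply {k n : ℕ} {g : Fin k → Fin n} (hg : StrictMono g) :
    ∀ j : Fin k, (j : ℕ) ≤ (g j : ℕ) := by
  intro ⟨jv, hj⟩
  induction jv with
  | zero => exact Nat.zero_le _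
  | succ m ih =>
    have hm : m < k := Nat.lt_of_succ_lt hj
    have h1 : (g ⟨m, hm⟩ : ℕ) < (g ⟨m + 1, hj⟩ : ℕ) := by
      exact_mod_cast hg (show (⟨m, hm⟩ : Fin k) < ⟨m + 1, hj⟩ by simp [Fin.lt_def])
    have h2 := ih hm
    simp only [Fin.val_mk] at h1 h2 ⊢
    omega

/-- sum over any finset is at most the sum of the first `card` entries of an antitone tuple -/
lemma sum_le_sorted {n : ℕ} {w : Fin n → ℝ} (hw : Antitone w) (h0 : ∀ i, 0 ≤ w i)
    (t : Finset (Fin n)) :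
    ∑ i ∈ t, w i ≤ ∑ j ∈ range t.card, extz w j := by
  set k := t.card with hk
  have hkn : k ≤ n := by
    calc k = t.card := rfl
    _ ≤ Fintype.card (Fin n) := t.card_le_univ
    _ = n := Fintype.card_fin n
  have hmap : Finset.univ.map (t.orderEmbOfFin hk.symm).toEmbedding = t := by
    apply Finset.coe_injective
    rw [Finset.coe_map]
    simpa using t.range_orderEmbOfFin hk.symm
  have hsum : ∑ i ∈ t, w i = ∑ j : Fin k, w (t.orderEmbOfFin hk.symm j) := by
    conv_lhs => rw [← hmap]
    rw [Finset.sum_map]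
    rfl
  rw [hsum]
  rw [← Fin.sum_univ_eq_sum_range (fun j => extz w j) k]
  apply Finset.sum_le_sum
  intro j _
  have hle : (j : ℕ) ≤ ((t.orderEmbOfFin hk.symm j) : ℕ) :=
    strictMono_le_apply (t.orderEmbOfFin hk.symm).strictMono j
  have hjn : (j : ℕ) < n := lt_of_lt_of_le j.2 hkn
  have : extz w (j : ℕ) = w ⟨j, hjn⟩ := dif_pos hjn
  rw [this]
  exact hw (show (⟨(j : ℕ), hjn⟩ : Fin n) ≤ _ by exact_mod_cast hle)

lemma tangent {a b : ℝ} (ha : 0 < a) (hb : 0 ≤ b) :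
    a * Real.log a + (Real.log a + 1) * (b - a) ≤ b * Real.log b := by
  rcases eq_or_lt_of_le hb with h | h
  · rw [← h]
    ring_nf
    nlinarith [ha]
  · have hlog := Real.log_le_sub_one_of_pos (div_pos ha h)
    rw [Real.log_div (ne_of_gt ha) (ne_of_gt h)] at hlog
    have h2 : b * (Real.log a - Real.log b) ≤ a - b := by
      have h3 := mul_le_mul_of_nonneg_left hlog (le_of_lt h)
      have hba : b * (a / b) = a := by field_simp
      nlinarith [h3]
    nlinarith [h2]

lemma entropy_aux (u v : ℕ → ℝ) (n : ℕ)
    (hu : Antitone u) (hu0 : ∀ i, 0 ≤ u i) (hv0 : ∀ i, 0 ≤ v i)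
    (hun : u n = 0) (hvn : ∀ i, n ≤ i → v i = 0)
    (hAB : ∀ k, k ≤ n → ∑ i ∈ range k, u i ≤ ∑ i ∈ range k, v i)
    (hsum : ∑ i ∈ range n, u i = ∑ i ∈ range n, v i) :
    ∑ i ∈ range n, u i * Real.log (u i) ≤ ∑ i ∈ range n, v i * Real.log (v i) := by
  have hex : ∃ i, u i = 0 := ⟨n, hun⟩
  set m := Nat.find hex with hm
  have hm0 : u m = 0 := Nat.find_spec hex
  have hmn : m ≤ n := Nat.find_min' hex hun
  have hpos : ∀ i < m, 0 < u i := by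
    intro i hi
    exact lt_of_le_of_ne (hu0 i) (Ne.symm (Nat.find_min hex hi))
  have uzero : ∀ i, m ≤ i → u i = 0 :=
    fun i hi => le_antisymm (hm0 ▸ hu hi) (hu0 i)
  rcases Nat.eq_zero_or_pos m with hm00 | hm1
  · have hu00 : ∀ i, u i = 0 := fun i => uzero i (hm00 ▸ Nat.zero_le i)
    have hvs : ∑ i ∈ range n, v i = 0 := by
      rw [← hsum]; exact Finset.sum_eq_zero fun i _ => hu00 i
    have hv00 : ∀ i ∈ range n, v i = 0 :=
      (Finset.sum_eq_zero_iff_of_nonneg (fun i _ => hv0 i)).mp hvs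
    rw [Finset.sum_eq_zero fun i _ => by rw [hu00 i]; ring,
      Finset.sum_eq_zero fun i hi => by rw [hv00 i hi]; ring]
  · have hAmn : ∑ i ∈ range n, u i = ∑ i ∈ range m, u i := by
      refine (Finset.sum_subset (Finset.range_subset_range.mpr hmn) ?_).symm
      intro i _ hi2
      exact uzero i (by simpa using hi2)
    have hBm : ∑ i ∈ range m, v i = ∑ i ∈ range m, u i := by
      refine le_antisymm ?_ (hAB m hmn)
      calc ∑ i ∈ range m, v i ≤ ∑ i ∈ range n, v i :=
            Finset.sum_le_sum_of_subset_of_nonneg (Finset.range_subset_range.mpr hmn)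
              (fun i _ _ => hv0 i)
        _ = ∑ i ∈ range m, u i := by rw [← hsum, hAmn]
    have vzero : ∀ i, m ≤ i → v i = 0 := by
      intro i hi
      by_cases hin : i < n
      · have hsplit : ∑ i ∈ Finset.Ico m n, v i = 0 := by
          have := Finset.sum_Ico_consecutive v (Nat.zero_le m) hmn
          simp only [← Finset.range_eq_Ico] at this
          have h2 : ∑ i ∈ range n, v i = ∑ i ∈ range m, u i := by rw [← hsum, hAmn]
          linarith [hBm, h2, this]
        exact (Finset.sum_eq_zero_iff_of_nonneg (fun i _ => hv0 i)).mp hsplit i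
          (Finset.mem_Ico.mpr ⟨hi, hin⟩)
      · exact hvn i (le_of_not_gt hin)
    have hredu : ∑ i ∈ range n, u i * Real.log (u i) = ∑ i ∈ range m, u i * Real.log (u i) := by
      refine (Finset.sum_subset (Finset.range_subset_range.mpr hmn) ?_).symm
      intro i _ hi2
      rw [uzero i (by simpa using hi2)]; ring
    have hredv : ∑ i ∈ range n, v i * Real.log (v i) = ∑ i ∈ range m, v i * Real.log (v i) := by
      refine (Finset.sum_subset (Finset.range_subset_range.mpr hmn) ?_).symm
      intro i _ hi2
      rw [vzero i (by simpa using hi2)]; ring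
    rw [hredu, hredv]
    have key : ∑ k ∈ range m, (u k * Real.log (u k) + (Real.log (u k) + 1) * (v k - u k)) ≤
        ∑ k ∈ range m, v k * Real.log (v k) := by
      refine Finset.sum_le_sum fun k hk => ?_
      exact tangent (hpos k (Finset.mem_range.mp hk)) (hv0 k)
    rw [Finset.sum_add_distrib] at key
    have habel : 0 ≤ ∑ k ∈ range m, (Real.log (u k) + 1) * (v k - u k) := by
      have claim : ∀ K, 1 ≤ K → K ≤ m →
          (Real.log (u (K - 1)) + 1) * ((∑ i ∈ range K, v i) - ∑ i ∈ range K, u i) ≤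
          ∑ k ∈ range K, (Real.log (u k) + 1) * (v k - u k) := by
        intro K
        induction K with
        | zero => omega
        | succ K ih =>
          intro _ hKm
          by_cases hK0 : K = 0
          · subst hK0
            simp [Finset.sum_range_one]
          · have hK1 : 1 ≤ K := Nat.one_le_iff_ne_zero.mpr hK0
            have hKltm : K < m := hKm
            have IH := ih hK1 (le_of_lt hKltm)
            have hDK : 0 ≤ (∑ i ∈ range K, v i) - ∑ i ∈ range K, u i :=
              sub_nonneg.mpr (hAB K (le_trans (le_of_lt hKltm) hmn))
            have hs : Real.log (u K) + 1 ≤ Real.log (u (K - 1)) + 1 := by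
              have := Real.log_le_log (hpos K hKltm) (hu (Nat.sub_le K 1))
              linarith
            have h3 : (Real.log (u K) + 1) *
                ((∑ i ∈ range K, v i) - ∑ i ∈ range K, u i) ≤
                (Real.log (u (K - 1)) + 1) *
                ((∑ i ∈ range K, v i) - ∑ i ∈ range K, u i) :=
              mul_le_mul_of_nonneg_right hs hDK
            simp only [Finset.sum_range_succ]
            simp only [Nat.add_sub_cancel]
            nlinarith [IH, h3]
      have := claim m hm1 le_rfl
      rw [hBm, sub_self, mul_zero] at this
      exact this
    linarith

section glue
variable {n : ℕ} (v : Fin n → ℝ) (σ : Equiv.Perm (Fin n))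

lemma bdd (k : ℕ) :
    BddAbove {t : ℝ | ∃ s : Finset (Fin n), s.card = k ∧ t = ∑ i ∈ s, v i} := by
  apply BddAbove.mono ?_ (Set.finite_range (fun s : Finset (Fin n) => ∑ i ∈ s, v i)).bddAbove
  rintro t ⟨s, -, rfl⟩
  exact ⟨s, rfl⟩

lemma sorted_le_kMaxSum (k : ℕ) (hk : k ≤ n) :
    ∑ j ∈ range k, extz (fun i => v (σ i)) j ≤ kMaxSum v k := by
  apply le_csSup (bdd v k)
  refine ⟨(Finset.univ.map (Fin.castLEEmb hk)).image σ, ?_, ?_⟩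
  · rw [Finset.card_image_of_injective _ σ.injective, Finset.card_map, Finset.card_univ,
      Fintype.card_fin]
  · rw [Finset.sum_image (fun i _ j _ h => σ.injective h), Finset.sum_map]
    rw [← Fin.sum_univ_eq_sum_range (fun j => extz (fun i => v (σ i)) j) k]
    apply Finset.sum_congr rfl
    intro j _
    have hjn : (j : ℕ) < n := lt_of_lt_of_le j.2 hk
    simp [extz, hjn]
    rfl

lemma kMaxSum_le_sorted (hanti : Antitone (fun i => v (σ i))) (h0 : ∀ i, 0 ≤ v i)
    (k : ℕ) (hk : k ≤ n) :
    kMaxSum v k ≤ ∑ j ∈ range k, extz (fun i => v (σ i)) j := by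
  apply csSup_le
  · obtain ⟨s, -, hs⟩ := Finset.exists_subset_card_eq
      (show k ≤ (Finset.univ : Finset (Fin n)).card by simpa using hk)
    exact ⟨∑ i ∈ s, v i, s, hs, rfl⟩
  · rintro t ⟨s, hcard, rfl⟩
    have hmap : ∑ i ∈ s.map σ.symm.toEmbedding, v (σ i) = ∑ i ∈ s, v i := by
      rw [Finset.sum_map]
      exact Finset.sum_congr rfl fun i _ => by simp
    have hcard2 : (s.map σ.symm.toEmbedding).card = k := by rw [Finset.card_map, hcard]
    have := sum_le_sorted hanti (fun i => h0 (σ i)) (s.map σ.symm.toEmbedding)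
    rw [hcard2, hmap] at this
    exact this
end glue

theorem stmt7 (n : ℕ) (x y : Fin n → ℝ)
    (hx0 : ∀ i, 0 ≤ x i) (hy0 : ∀ i, 0 ≤ y i)
    (hx1 : ∑ i, x i = 1) (hy1 : ∑ i, y i = 1)
    (hxy : Majorizes x y) :
    -∑ i, y i * Real.logb 2 (y i) ≤ -∑ i, x i * Real.logb 2 (x i) := by
  obtain ⟨hmaj, -⟩ := hxy
  set σ := Tuple.sort (fun i => -x i) with hσ
  set τ := Tuple.sort (fun i => -y i) with hτ
  have ha : Antitone (fun i => x (σ i)) := by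
    intro i j hij
    have := Tuple.monotone_sort (fun i => -x i) hij
    simpa using this
  have hb : Antitone (fun i => y (τ i)) := by
    intro i j hij
    have := Tuple.monotone_sort (fun i => -y i) hij
    simpa using this
  have ha0 : ∀ i, 0 ≤ x (σ i) := fun i => hx0 _
  have hb0 : ∀ i, 0 ≤ y (τ i) := fun i => hy0 _
  have hu0 : ∀ i, 0 ≤ extz (fun i => x (σ i)) i := by
    intro i; unfold extz; split
    · exact hx0 _
    · exact le_refl 0
  have hv0 : ∀ i, 0 ≤ extz (fun i => y (τ i)) i := by
    intro i; unfold extz; split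
    · exact hy0 _
    · exact le_refl 0
  have hu_anti : Antitone (extz (fun i => x (σ i))) := extz_antitone ha ha0
  have hun : extz (fun i => x (σ i)) n = 0 := dif_neg (lt_irrefl n)
  have hvn : ∀ i, n ≤ i → extz (fun i => y (τ i)) i = 0 :=
    fun i hi => dif_neg (not_lt.mpr hi)
  have heq : ∀ (z : Fin n → ℝ) (i : Fin n), extz z i.val = z i := by
    intro z i
    simp [extz]
  have husum : ∑ i ∈ range n, extz (fun i => x (σ i)) i = 1 := by
    rw [← Fin.sum_univ_eq_sum_range (fun j => extz (fun i => x (σ i)) j) n]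
    calc ∑ i : Fin n, extz (fun i => x (σ i)) i.val = ∑ i : Fin n, x (σ i) :=
          Finset.sum_congr rfl fun i _ => heq _ i
      _ = ∑ i, x i := Equiv.sum_comp σ x
      _ = 1 := hx1
  have hvsum : ∑ i ∈ range n, extz (fun i => y (τ i)) i = 1 := by
    rw [← Fin.sum_univ_eq_sum_range (fun j => extz (fun i => y (τ i)) j) n]
    calc ∑ i : Fin n, extz (fun i => y (τ i)) i.val = ∑ i : Fin n, y (τ i) :=
          Finset.sum_congr rfl fun i _ => heq _ i
      _ = ∑ i, y i := Equiv.sum_comp τ y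
      _ = 1 := hy1
  have hAB : ∀ k, k ≤ n → ∑ i ∈ range k, extz (fun i => x (σ i)) i ≤
      ∑ i ∈ range k, extz (fun i => y (τ i)) i := by
    intro k hk
    rcases Nat.eq_zero_or_pos k with rfl | hk1
    · simp
    calc ∑ i ∈ range k, extz (fun i => x (σ i)) i ≤ kMaxSum x k :=
          sorted_le_kMaxSum x σ k hk
      _ ≤ kMaxSum y k := hmaj k hk1 hk
      _ ≤ ∑ i ∈ range k, extz (fun i => y (τ i)) i := kMaxSum_le_sorted y τ hb hy0 k hk
  have main := entropy_aux (extz (fun i => x (σ i))) (extz (fun i => y (τ i))) n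
    hu_anti hu0 hv0 hun hvn hAB (by rw [husum, hvsum])
  have hxlog : ∑ i, x i * Real.log (x i) =
      ∑ i ∈ range n, extz (fun i => x (σ i)) i * Real.log (extz (fun i => x (σ i)) i) := by
    rw [← Fin.sum_univ_eq_sum_range
      (fun j => extz (fun i => x (σ i)) j * Real.log (extz (fun i => x (σ i)) j)) n]
    calc ∑ i, x i * Real.log (x i) = ∑ i : Fin n, x (σ i) * Real.log (x (σ i)) :=
          (Equiv.sum_comp σ (fun i => x i * Real.log (x i))).symm
      _ = _ := Finset.sum_congr rfl fun i _ => by rw [heq _ i]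
  have hylog : ∑ i, y i * Real.log (y i) =
      ∑ i ∈ range n, extz (fun i => y (τ i)) i * Real.log (extz (fun i => y (τ i)) i) := by
    rw [← Fin.sum_univ_eq_sum_range
      (fun j => extz (fun i => y (τ i)) j * Real.log (extz (fun i => y (τ i)) j)) n]
    calc ∑ i, y i * Real.log (y i) = ∑ i : Fin n, y (τ i) * Real.log (y (τ i)) :=
          (Equiv.sum_comp τ (fun i => y i * Real.log (y i))).symm
      _ = _ := Finset.sum_congr rfl fun i _ => by rw [heq _ i]
  have hmain2 : ∑ i, x i * Real.log (x i) ≤ ∑ i, y i * Real.log (y i) := by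
    rw [hxlog, hylog]; exact main
  have hlog2 : (0:ℝ) < Real.log 2 := Real.log_pos one_lt_two
  have h1 : ∀ z : Fin n → ℝ,
      ∑ i, z i * Real.logb 2 (z i) = (∑ i, z i * Real.log (z i)) / Real.log 2 := by
    intro z
    rw [Finset.sum_div]
    exact Finset.sum_congr rfl fun i _ => by rw [Real.logb]; ring
  rw [h1, h1]
  apply neg_le_neg
  gcongr
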